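/- The Euler–Lagrange equation of the functional J(ξ) = ∫_α^β [(ξ(u) - v(u))²/2 - a(u)² ln(ξ'(u))] du is ξ(u) - v(u) + (a(u)²/ξ'(u))' = 0; moreover, if ξ is a strictly increasing C² solution with inverse u(ξ), then multiplying by u'(ξ) transforms this equation into (a(u)² u')' = (v(u) - ξ) u', i.e., the self-similar form of the degenerate parabolic equation u_t + v(u)u_x = t(a²(u)u_x)_x. -/

import Mathlib

open MeasureTheory

noncomputable def J (α β : ℝ) (v a : ℝ → ℝ) (ξ : ℝ → ℝ) : ℝ :=
  ∫ u in α..β, ((ξ u - v u) ^ 2 / 2 - (a u) ^ 2 * Real.log (deriv ξ u))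

set_option maxHeartbeats 1000000 in
lemma part1 (α β : ℝ) (hαβ : α < β) (v a : ℝ → ℝ)
    (hv : ContDiff ℝ 1 v) (ha : ContDiff ℝ 1 a)
    (ξ : ℝ → ℝ) (hξ : ContDiff ℝ 2 ξ) (hξ' : ∀ u ∈ Set.Icc α β, 0 < deriv ξ u)
    (η : ℝ → ℝ) (hη : ContDiff ℝ 1 η) (hηα : η α = 0) (hηβ : η β = 0) :
    HasDerivAt (fun t : ℝ => J α β v a (fun u => ξ u + t * η u))
        (∫ u in α..β,
          (ξ u - v u + deriv (fun w => (a w) ^ 2 / deriv ξ w) u) * η u) 0 := by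
  have hξd : Differentiable ℝ ξ := hξ.differentiable (by norm_num)
  have hξ'c1 : ContDiff ℝ 1 (deriv ξ) := by
    rw [show (2 : WithTop ℕ∞) = 1 + 1 from rfl, contDiff_succ_iff_deriv] at hξ
    exact hξ.2.2
  have hηd : Differentiable ℝ η := hη.differentiable one_ne_zero
  have had : Differentiable ℝ a := ha.differentiable one_ne_zero
  have cξ' : Continuous (deriv ξ) := hξ'c1.continuous
  have cξ'' : Continuous (deriv (deriv ξ)) := hξ'c1.continuous_deriv le_rfl
  have cη' : Continuous (deriv η) := hη.continuous_deriv le_rfl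
  have ca' : Continuous (deriv a) := ha.continuous_deriv le_rfl
  have cξ : Continuous ξ := hξd.continuous
  have cv : Continuous v := hv.continuous
  have cA : Continuous a := ha.continuous
  have cη : Continuous η := hη.continuous
  have hIcc := Set.uIcc_of_le hαβ.le
  have hIoc : Set.uIoc α β ⊆ Set.Icc α β := by
    rw [Set.uIoc_of_le hαβ.le]; exact Set.Ioc_subset_Icc_self
  -- rewrite J
  have hderivsum : ∀ t u : ℝ, deriv (fun u => ξ u + t * η u) u = deriv ξ u + t * deriv η u := by
    intro t u
    exact ((hξd u).hasDerivAt.add ((hηd u).hasDerivAt.const_mul t)).deriv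
  have hJeq : (fun t : ℝ => J α β v a (fun u => ξ u + t * η u)) =
      fun t : ℝ => ∫ u in α..β,
        ((ξ u + t * η u - v u) ^ 2 / 2 - (a u) ^ 2 * Real.log (deriv ξ u + t * deriv η u)) := by
    funext t
    simp only [J, hderivsum]
  -- constants
  obtain ⟨c, hc, hcmin⟩ := (isCompact_Icc (a := α) (b := β)).exists_isMinOn
    ⟨α, Set.left_mem_Icc.2 hαβ.le⟩ cξ'.continuousOn
  set m := deriv ξ c with hmdef
  have hm : 0 < m := hξ' c hc
  have hmle : ∀ u ∈ Set.Icc α β, m ≤ deriv ξ u := fun u hu => hcmin hu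
  obtain ⟨Mξ, hMξ⟩ := (isCompact_Icc (a := α) (b := β)).exists_bound_of_continuousOn
    hξd.continuous.continuousOn
  obtain ⟨Mv, hMv⟩ := (isCompact_Icc (a := α) (b := β)).exists_bound_of_continuousOn
    hv.continuous.continuousOn
  obtain ⟨Ma, hMa⟩ := (isCompact_Icc (a := α) (b := β)).exists_bound_of_continuousOn
    ha.continuous.continuousOn
  obtain ⟨Mη, hMη⟩ := (isCompact_Icc (a := α) (b := β)).exists_bound_of_continuousOn
    hη.continuous.continuousOn
  obtain ⟨Mη', hMη'⟩ := (isCompact_Icc (a := α) (b := β)).exists_bound_of_continuousOn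
    cη'.continuousOn
  simp only [Real.norm_eq_abs] at hMξ hMv hMa hMη hMη'
  have hMη'0 : 0 ≤ Mη' := le_trans (abs_nonneg _) (hMη' α (Set.left_mem_Icc.2 hαβ.le))
  have hMη0 : 0 ≤ Mη := le_trans (abs_nonneg _) (hMη α (Set.left_mem_Icc.2 hαβ.le))
  have hMξ0 : 0 ≤ Mξ := le_trans (abs_nonneg _) (hMξ α (Set.left_mem_Icc.2 hαβ.le))
  have hMv0 : 0 ≤ Mv := le_trans (abs_nonneg _) (hMv α (Set.left_mem_Icc.2 hαβ.le))
  have hMa0 : 0 ≤ Ma := le_trans (abs_nonneg _) (hMa α (Set.left_mem_Icc.2 hαβ.le))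
  set ε := m / (2 * (Mη' + 1)) with hεdef
  have hε : 0 < ε := by positivity
  have hεM : ε * Mη' ≤ m / 2 := by
    have h1 : ε * (Mη' + 1) = m / 2 := by
      rw [hεdef]; field_simp
    nlinarith
  have hden : ∀ t ∈ Metric.ball (0 : ℝ) ε, ∀ u ∈ Set.Icc α β,
      m / 2 ≤ deriv ξ u + t * deriv η u := by
    intro t ht u hu
    have h1 : |t| < ε := by simpa [Real.dist_eq] using ht
    have h2 : |t * deriv η u| ≤ ε * Mη' := by
      rw [abs_mul]
      exact mul_le_mul h1.le (hMη' u hu) (abs_nonneg _) hε.le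
    have h3 := abs_le.mp h2
    have := hmle u hu
    nlinarith [hεM]
  set C : ℝ := (Mξ + ε * Mη + Mv) * Mη + Ma ^ 2 * (Mη' / (m / 2)) with hCdef
  -- dominated derivative lemma
  have main := intervalIntegral.hasDerivAt_integral_of_dominated_loc_of_deriv_le
    (μ := volume) (a := α) (b := β) (x₀ := (0 : ℝ)) (s := Metric.ball 0 ε) (bound := fun _ => C)
    (F := fun (t : ℝ) (u : ℝ) =>
      (ξ u + t * η u - v u) ^ 2 / 2 - (a u) ^ 2 * Real.log (deriv ξ u + t * deriv η u))
    (F' := fun (t : ℝ) (u : ℝ) =>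
      (ξ u + t * η u - v u) * η u - (a u) ^ 2 * (deriv η u / (deriv ξ u + t * deriv η u)))
    (Metric.ball_mem_nhds 0 hε) ?hF_meas ?hF_int ?hF'_meas ?h_bound ?bound_int ?h_diff
  case hF_meas =>
    filter_upwards with t
    apply Measurable.aestronglyMeasurable
    have m1 : Measurable (fun u : ℝ => ξ u + t * η u - v u) :=
      (hξd.continuous.measurable.add (hηd.continuous.measurable.const_mul t)).sub
        hv.continuous.measurable
    have m2 : Measurable (fun u : ℝ => deriv ξ u + t * deriv η u) :=
      cξ'.measurable.add (cη'.measurable.const_mul t)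
    exact ((m1.pow_const 2).div_const 2).sub
      ((ha.continuous.measurable.pow_const 2).mul (Real.measurable_log.comp m2))
  case hF_int =>
    apply ContinuousOn.intervalIntegrable
    rw [hIcc]
    apply ContinuousOn.sub
    · fun_prop
    · apply ContinuousOn.mul (by fun_prop)
      apply ContinuousOn.log (by fun_prop)
      intro u hu
      have := hξ' u hu
      simp only [zero_mul, add_zero]
      positivity
  case hF'_meas =>
    apply Measurable.aestronglyMeasurable
    have m1 : Measurable (fun u : ℝ => ξ u + (0:ℝ) * η u - v u) :=
      (hξd.continuous.measurable.add (hηd.continuous.measurable.const_mul 0)).sub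
        hv.continuous.measurable
    have m2 : Measurable (fun u : ℝ => deriv ξ u + (0:ℝ) * deriv η u) :=
      cξ'.measurable.add (cη'.measurable.const_mul 0)
    exact (m1.mul hη.continuous.measurable).sub
      ((ha.continuous.measurable.pow_const 2).mul (cη'.measurable.div m2))
  case h_bound =>
    filter_upwards with u hu t ht
    have huI := hIoc hu
    have hd := hden t ht u huI
    have hdpos : 0 < deriv ξ u + t * deriv η u := lt_of_lt_of_le (by positivity) hd
    have htabs : |t| < ε := by simpa [Real.dist_eq] using ht
    rw [Real.norm_eq_abs]
    calc |(ξ u + t * η u - v u) * η u - (a u) ^ 2 * (deriv η u / (deriv ξ u + t * deriv η u))|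
        ≤ |(ξ u + t * η u - v u) * η u| +
          |(a u) ^ 2 * (deriv η u / (deriv ξ u + t * deriv η u))| := abs_sub _ _
      _ ≤ (Mξ + ε * Mη + Mv) * Mη + Ma ^ 2 * (Mη' / (m / 2)) := by
          have hMdiv : 0 ≤ Mη' / (m / 2) := div_nonneg hMη'0 (by linarith)
          apply add_le_add
          · rw [abs_mul]
            apply mul_le_mul _ (hMη u huI) (abs_nonneg _)
              (add_nonneg (add_nonneg hMξ0 (mul_nonneg hε.le hMη0)) hMv0)
            calc |ξ u + t * η u - v u| ≤ |ξ u| + |t * η u| + |v u| := by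
                  exact (abs_sub _ _).trans (by gcongr; exact abs_add_le _ _)
              _ ≤ Mξ + ε * Mη + Mv := by
                  gcongr
                  · exact hMξ u huI
                  · rw [abs_mul]
                    exact mul_le_mul htabs.le (hMη u huI) (abs_nonneg _) hε.le
                  · exact hMv u huI
          · rw [abs_mul, abs_div]
            apply mul_le_mul _ _ (by positivity) (by positivity)
            · rw [abs_pow]
              exact pow_le_pow_left₀ (abs_nonneg _) (hMa u huI) 2
            · rw [abs_of_pos hdpos]
              exact div_le_div₀ hMη'0 (hMη' u huI) (by positivity) hd
  case bound_int => exact intervalIntegrable_const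
  case h_diff =>
    filter_upwards with u hu t ht
    have huI := hIoc hu
    have hd := hden t ht u huI
    have hdpos : 0 < deriv ξ u + t * deriv η u := lt_of_lt_of_le (by positivity) hd
    have h1 : HasDerivAt (fun t : ℝ => ξ u + t * η u - v u) (η u) t := by
      simpa using (((hasDerivAt_id t).mul_const (η u)).const_add (ξ u)).sub_const (v u)
    have h2 : HasDerivAt (fun t : ℝ => (ξ u + t * η u - v u) ^ 2 / 2)
        ((ξ u + t * η u - v u) * η u) t := by
      have := (h1.pow 2).div_const 2
      refine this.congr_deriv ?_
      ring
    have h3 : HasDerivAt (fun t : ℝ => deriv ξ u + t * deriv η u) (deriv η u) t := by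
      simpa using ((hasDerivAt_id t).mul_const (deriv η u)).const_add (deriv ξ u)
    have h4 : HasDerivAt (fun t : ℝ => Real.log (deriv ξ u + t * deriv η u))
        (deriv η u / (deriv ξ u + t * deriv η u)) t := by
      have := (Real.hasDerivAt_log hdpos.ne').comp t h3
      refine this.congr_deriv ?_
      ring
    exact h2.sub (h4.const_mul ((a u) ^ 2))
  -- now rewrite the conclusion
  rw [hJeq]
  convert main.2 using 1
  · rfl
  · rfl
  -- ∫ target = ∫ F' 0
  set G : ℝ → ℝ := fun u => (a u) ^ 2 / deriv ξ u with hGdef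
  have hGdiff : ∀ u ∈ Set.Icc α β, DifferentiableAt ℝ G u := by
    intro u hu
    exact (((had u).hasDerivAt.pow 2).differentiableAt).div (hξ'c1.differentiable one_ne_zero u)
      (hξ' u hu).ne'
  set g : ℝ → ℝ := fun u =>
    (2 * a u * deriv a u * deriv ξ u - (a u) ^ 2 * deriv (deriv ξ) u) / (deriv ξ u) ^ 2
    with hgdef
  have hGd : ∀ u ∈ Set.Icc α β, HasDerivAt G (g u) u := by
    intro u hu
    have h1 : HasDerivAt (fun w => (a w) ^ 2) (2 * a u * deriv a u) u := by
      have := ((had u).hasDerivAt).pow 2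
      refine this.congr_deriv ?_
      ring
    have h2 : HasDerivAt (deriv ξ) (deriv (deriv ξ) u) u :=
      (hξ'c1.differentiable one_ne_zero u).hasDerivAt
    exact h1.div h2 (hξ' u hu).ne'
  have hgcont : ContinuousOn g (Set.Icc α β) := by
    apply ContinuousOn.div (by fun_prop) (by fun_prop)
    intro u hu
    exact pow_ne_zero 2 (hξ' u hu).ne'
  have hderivG_eq : Set.EqOn (fun u => deriv G u) g (Set.Icc α β) :=
    fun u hu => (hGd u hu).deriv
  have hderivGcont : ContinuousOn (fun u => deriv G u) (Set.Icc α β) :=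
    hgcont.congr hderivG_eq
  have hGcont : ContinuousOn G (Set.Icc α β) := by
    apply ContinuousOn.div (by fun_prop) (by fun_prop)
    intro u hu
    exact (hξ' u hu).ne'
  -- integrability
  have hA : IntervalIntegrable (fun u => (ξ u - v u) * η u) volume α β :=
    (Continuous.intervalIntegrable (by fun_prop) _ _)
  have hB : IntervalIntegrable (fun u => G u * deriv η u) volume α β := by
    apply ContinuousOn.intervalIntegrable
    rw [hIcc]
    exact hGcont.mul cη'.continuousOn
  have hCint : IntervalIntegrable (fun u => deriv G u * η u) volume α β := by
    apply ContinuousOn.intervalIntegrable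
    rw [hIcc]
    exact hderivGcont.mul hη.continuous.continuousOn
  -- integration by parts
  have hibp : ∫ u in α..β, G u * deriv η u = - ∫ u in α..β, deriv G u * η u := by
    have h := intervalIntegral.integral_mul_deriv_eq_deriv_mul
      (u := G) (v := η) (u' := fun u => deriv G u) (v' := fun u => deriv η u)
      (fun x hx => (hGdiff x (hIcc ▸ hx)).hasDerivAt)
      (fun x hx => (hηd x).hasDerivAt)
      (by apply ContinuousOn.intervalIntegrable; rw [hIcc]; exact hderivGcont)
      (cη'.intervalIntegrable _ _)
    rw [h, hηα, hηβ]
    ring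
  calc ∫ u in α..β, (ξ u - v u + deriv (fun w => (a w) ^ 2 / deriv ξ w) u) * η u
      = ∫ u in α..β, ((ξ u - v u) * η u + deriv G u * η u) := by
        apply intervalIntegral.integral_congr
        intro u hu
        simp only [hGdef]
        ring
    _ = (∫ u in α..β, (ξ u - v u) * η u) + ∫ u in α..β, deriv G u * η u :=
        intervalIntegral.integral_add hA hCint
    _ = (∫ u in α..β, (ξ u - v u) * η u) - ∫ u in α..β, G u * deriv η u := by
        rw [hibp]; ring
    _ = ∫ u in α..β, ((ξ u - v u) * η u - G u * deriv η u) :=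
        (intervalIntegral.integral_sub hA hB).symm
    _ = ∫ u in α..β, ((ξ u + 0 * η u - v u) * η u -
          (a u) ^ 2 * (deriv η u / (deriv ξ u + 0 * deriv η u))) := by
        apply intervalIntegral.integral_congr
        intro u hu
        simp only [hGdef, zero_mul, add_zero]
        ring


lemma part2 (α β : ℝ) (hαβ : α < β) (v a : ℝ → ℝ)
    (hv : ContDiff ℝ 1 v) (ha : ContDiff ℝ 1 a)
    (ξ : ℝ → ℝ) (hξ : ContDiff ℝ 2 ξ) (hξ' : ∀ u ∈ Set.Icc α β, 0 < deriv ξ u)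
    (w : ℝ → ℝ) (hw : ContDiff ℝ 2 w)
    (hwinv : ∀ u ∈ Set.Icc α β, w (ξ u) = u)
    (hEL : ∀ u ∈ Set.Icc α β,
        ξ u - v u + deriv (fun w' => (a w') ^ 2 / deriv ξ w') u = 0) :
    ∀ x ∈ Set.Icc (ξ α) (ξ β),
        deriv (fun x' => (a (w x')) ^ 2 * deriv w x') x =
          (v (w x) - x) * deriv w x := by
  have hξd : Differentiable ℝ ξ := hξ.differentiable (by norm_num)
  have hξ'c1 : ContDiff ℝ 1 (deriv ξ) := by
    rw [show (2 : WithTop ℕ∞) = 1 + 1 from rfl, contDiff_succ_iff_deriv] at hξ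
    exact hξ.2.2
  have hwd : Differentiable ℝ w := hw.differentiable (by norm_num)
  have hw'c1 : ContDiff ℝ 1 (deriv w) := by
    rw [show (2 : WithTop ℕ∞) = 1 + 1 from rfl, contDiff_succ_iff_deriv] at hw
    exact hw.2.2
  set G : ℝ → ℝ := fun u => (a u) ^ 2 / deriv ξ u with hG
  set F : ℝ → ℝ := fun x' => (a (w x')) ^ 2 * deriv w x' with hF
  -- strict monotonicity
  have hmono : StrictMonoOn ξ (Set.Icc α β) :=
    strictMonoOn_of_deriv_pos (convex_Icc α β) hξd.continuous.continuousOn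
      (fun u hu => hξ' u (Set.mem_Icc_of_Ioo (by rwa [interior_Icc] at hu)))
  have hξαβ : ξ α < ξ β := hmono (Set.left_mem_Icc.2 hαβ.le) (Set.right_mem_Icc.2 hαβ.le) hαβ
  -- surjectivity onto [ξ α, ξ β]
  have hsurj : Set.Icc (ξ α) (ξ β) ⊆ ξ '' Set.Icc α β :=
    intermediate_value_Icc hαβ.le hξd.continuous.continuousOn
  -- key: F = G ∘ w on the open interval
  have hFG : Set.EqOn F (G ∘ w) (Set.Ioo (ξ α) (ξ β)) := by
    intro x' hx'
    obtain ⟨u', hu', hxu'⟩ := hsurj (Set.mem_Icc_of_Ioo hx')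
    have huIoo : u' ∈ Set.Ioo α β := by
      rcases hu'.1.lt_or_eq with h | h
      · rcases hu'.2.lt_or_eq with h2 | h2
        · exact ⟨h, h2⟩
        · exact absurd (h2 ▸ hxu') (by simpa using hx'.2.ne')
      · exact absurd (h ▸ hxu') (by simpa using hx'.1.ne)
    subst hxu'
    have hwx : w (ξ u') = u' := hwinv u' hu'
    -- derivative of w at ξ u' is 1 / ξ'(u')
    have hcomp : HasDerivAt (w ∘ ξ) (deriv w (ξ u') * deriv ξ u') u' :=
      (hwd.differentiableAt (x := ξ u')).hasDerivAt.comp u' (hξd u').hasDerivAt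
    have hid : deriv w (ξ u') * deriv ξ u' = 1 := by
      have heq : (w ∘ ξ) =ᶠ[nhds u'] id := by
        filter_upwards [Ioo_mem_nhds huIoo.1 huIoo.2] with z hz
        exact hwinv z (Set.mem_Icc_of_Ioo hz)
      have := hcomp.congr_of_eventuallyEq heq.symm
      exact this.unique (hasDerivAt_id u')
    have hξ'pos : deriv ξ u' ≠ 0 := (hξ' u' hu').ne'
    have : deriv w (ξ u') = 1 / deriv ξ u' := by
      field_simp at hid ⊢; linarith [hid]
    simp only [hF, hG, Function.comp_apply, hwx, this]
    ring
  -- equality on the open interval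
  have key : ∀ x ∈ Set.Ioo (ξ α) (ξ β),
      deriv F x = (v (w x) - x) * deriv w x := by
    intro x hx
    obtain ⟨u, hu, hxu⟩ := hsurj (Set.mem_Icc_of_Ioo hx)
    subst hxu
    have hwx : w (ξ u) = u := hwinv u hu
    have hderiv_eq : deriv F (ξ u) = deriv (G ∘ w) (ξ u) := by
      apply Filter.EventuallyEq.deriv_eq
      filter_upwards [Ioo_mem_nhds hx.1 hx.2] with z hz using hFG hz
    have hGdiff : DifferentiableAt ℝ G u := by
      exact ((ha.differentiable one_ne_zero u).hasDerivAt.pow 2).differentiableAt.div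
        ((hξ'c1.differentiable one_ne_zero) u) (hξ' u hu).ne'
    have hchain : HasDerivAt (G ∘ w) (deriv G (w (ξ u)) * deriv w (ξ u)) (ξ u) :=
      (hwx ▸ hGdiff.hasDerivAt).comp (ξ u) (hwd (ξ u)).hasDerivAt
    have hELu := hEL u hu
    have : deriv G u = v u - ξ u := by
      have : deriv (fun w' => (a w') ^ 2 / deriv ξ w') u = deriv G u := rfl
      linarith [hELu, this ▸ hELu]
    rw [hderiv_eq, hchain.deriv, hwx, this]
  -- extend to the closed interval by continuity
  have hFc1 : ContDiff ℝ 1 F := by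
    exact ((ha.comp (hw.of_le (by norm_num))).pow 2).mul hw'c1
  have hcont1 : Continuous (deriv F) := hFc1.continuous_deriv le_rfl
  have hcont2 : Continuous (fun x => (v (w x) - x) * deriv w x) := by
    exact ((hv.continuous.comp hw.continuous).sub continuous_id).mul (hw'c1.continuous)
  have := (Set.EqOn.closure (fun x hx => key x hx) hcont1 hcont2)
  rw [closure_Ioo hξαβ.ne] at this
  exact this

theorem euler_lagrange_of_J (α β : ℝ) (hαβ : α < β) (v a : ℝ → ℝ)
    (hv : ContDiff ℝ 1 v) (ha : ContDiff ℝ 1 a) (ha0 : ∀ u, 0 ≤ a u)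
    (ξ : ℝ → ℝ) (hξ : ContDiff ℝ 2 ξ) (hξ' : ∀ u ∈ Set.Icc α β, 0 < deriv ξ u) :
    -- The first variation of `J` at `ξ` in a direction `η` vanishing at the
    -- endpoints is `∫ (ξ(u) - v(u) + (a(u)²/ξ'(u))') η(u) du`; hence the
    -- Euler–Lagrange equation of `J` is `ξ(u) - v(u) + (a(u)²/ξ'(u))' = 0`.
    (∀ η : ℝ → ℝ, ContDiff ℝ 1 η → η α = 0 → η β = 0 →
      HasDerivAt (fun t : ℝ => J α β v a (fun u => ξ u + t * η u))
        (∫ u in α..β,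
          (ξ u - v u + deriv (fun w => (a w) ^ 2 / deriv ξ w) u) * η u) 0) ∧
    -- Moreover, if `ξ` solves the Euler–Lagrange equation and `w` is its
    -- (C²) inverse `u = u(ξ)`, then `(a(u)² u')' = (v(u) - ξ) u'` in the
    -- self-similar variable, i.e. the self-similar form of
    -- `u_t + v(u)u_x - t(a²(u)u_x)_x = 0`.
    (∀ w : ℝ → ℝ, ContDiff ℝ 2 w →
      (∀ u ∈ Set.Icc α β, w (ξ u) = u) →
      (∀ u ∈ Set.Icc α β,
        ξ u - v u + deriv (fun w' => (a w') ^ 2 / deriv ξ w') u = 0) →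
      ∀ x ∈ Set.Icc (ξ α) (ξ β),
        deriv (fun x' => (a (w x')) ^ 2 * deriv w x') x =
          (v (w x) - x) * deriv w x) := by
  constructor
  · exact fun η hη h1 h2 => part1 α β hαβ v a hv ha ξ hξ hξ' η hη h1 h2
  · exact fun w hw hwinv hEL => part2 α β hαβ v a hv ha ξ hξ hξ' w hw hwinv hEL
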